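/- arXiv:2512.17747 — 5 statements merged into one kernel-verified Lean document; each statement's English description precedes it below -/
import Mathlib

section
/- For every integer m ≥ 2 and every integer k with 1 ≤ k ≤ m/2, one has 1 + tan²(πk/(m+1)) ≥ (1 + tan²(π/(m+1)))^k. -/
open Real

lemma cos_nsmul_sq_le (x : ℝ) (hx : 0 ≤ x) :
    ∀ k : ℕ, (k : ℝ) * x ≤ π / 2 → Real.cos ((k : ℝ) * x) ^ 2 ≤ Real.cos x ^ (2 * k) := by
  intro k
  induction k with
  | zero => simp
  | succ k ih =>
    intro hk1
    have hxk : (k : ℝ) * x ≤ π / 2 := by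
      have : (k : ℝ) * x ≤ ((k : ℝ) + 1) * x := by nlinarith
      push_cast at hk1; linarith
    have hk1' : ((k : ℝ) + 1) * x ≤ π / 2 := by push_cast at hk1; linarith
    have hx2 : x ≤ π / 2 := by nlinarith [Nat.cast_nonneg (α := ℝ) k]
    have hkx0 : 0 ≤ (k : ℝ) * x := by positivity
    have hsin1 : 0 ≤ Real.sin ((k : ℝ) * x) := Real.sin_nonneg_of_nonneg_of_le_pi hkx0 (by linarith [Real.pi_pos])
    have hsin2 : 0 ≤ Real.sin x := Real.sin_nonneg_of_nonneg_of_le_pi hx (by linarith [Real.pi_pos])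
    have hcos1 : 0 ≤ Real.cos ((k : ℝ) * x) := Real.cos_nonneg_of_mem_Icc ⟨by linarith, hxk⟩
    have hcosx : 0 ≤ Real.cos x := Real.cos_nonneg_of_mem_Icc ⟨by linarith, hx2⟩
    have hcs : 0 ≤ Real.cos (((k : ℝ) + 1) * x) :=
      Real.cos_nonneg_of_mem_Icc ⟨by nlinarith, hk1'⟩
    have hadd : Real.cos (((k : ℝ) + 1) * x)
        = Real.cos ((k : ℝ) * x) * Real.cos x - Real.sin ((k : ℝ) * x) * Real.sin x := by
      rw [add_mul, one_mul, Real.cos_add]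
    have hle : Real.cos (((k : ℝ) + 1) * x) ≤ Real.cos ((k : ℝ) * x) * Real.cos x := by
      rw [hadd]; nlinarith
    have hsq : Real.cos (((k : ℝ) + 1) * x) ^ 2 ≤ (Real.cos ((k : ℝ) * x) * Real.cos x) ^ 2 := by
      nlinarith
    have ih' := ih hxk
    have hcast : (((k + 1 : ℕ)) : ℝ) * x = ((k : ℝ) + 1) * x := by push_cast; ring
    calc Real.cos (((k + 1 : ℕ)) * x) ^ 2 = Real.cos (((k : ℝ) + 1) * x) ^ 2 := by rw [hcast]
      _ ≤ (Real.cos ((k : ℝ) * x) * Real.cos x) ^ 2 := hsq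
      _ = Real.cos ((k : ℝ) * x) ^ 2 * Real.cos x ^ 2 := by ring
      _ ≤ Real.cos x ^ (2 * k) * Real.cos x ^ 2 := by nlinarith
      _ = Real.cos x ^ (2 * (k + 1)) := by ring
  -- note: the calc first step may be broken; fix below

/-- For every integer `m ≥ 2` and every integer `1 ≤ k ≤ m/2`,
`1 + tan²(πk/(m+1)) ≥ (1 + tan²(π/(m+1)))^k`. -/
theorem one_add_tan_sq_ge_pow (m k : ℕ) (hm : 2 ≤ m) (hk1 : 1 ≤ k) (hk2 : 2 * k ≤ m) :
    (1 + Real.tan (π / (m + 1)) ^ 2) ^ k ≤ 1 + Real.tan (π * k / (m + 1)) ^ 2 := by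
  have hpi := Real.pi_pos
  have hm1 : (0:ℝ) < (m : ℝ) + 1 := by positivity
  set x : ℝ := π / (m + 1) with hxdef
  have hx0 : 0 < x := by positivity
  have hmk : (2 * k : ℝ) ≤ (m : ℝ) := by exact_mod_cast hk2
  have hkxlt : (k : ℝ) * x < π / 2 := by
    rw [hxdef]
    rw [mul_div_assoc', div_lt_div_iff₀ hm1 (by norm_num)]
    nlinarith
  have hkx : (k : ℝ) * x ≤ π / 2 := hkxlt.le
  have hm2 : (2:ℝ) ≤ (m:ℝ) := by exact_mod_cast hm
  have hxlt : x < π / 2 := by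
    rw [hxdef, div_lt_div_iff₀ hm1 (by norm_num)]
    nlinarith
  have hcosx : 0 < Real.cos x := Real.cos_pos_of_mem_Ioo ⟨by linarith, hxlt⟩
  have hkx0 : (0:ℝ) ≤ (k : ℝ) * x := by positivity
  have hcosk : 0 < Real.cos ((k : ℝ) * x) := Real.cos_pos_of_mem_Ioo ⟨by nlinarith, hkxlt⟩
  have key := cos_nsmul_sq_le x hx0.le k hkx
  have h1 : 1 + Real.tan x ^ 2 = 1 / Real.cos x ^ 2 := by
    rw [Real.tan_eq_sin_div_cos]
    field_simp; exact Real.cos_sq_add_sin_sq _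
  have heq : π * k / (m + 1) = (k : ℝ) * x := by rw [hxdef]; ring
  have h2 : 1 + Real.tan (π * k / (m + 1)) ^ 2 = 1 / Real.cos ((k : ℝ) * x) ^ 2 := by
    rw [heq, Real.tan_eq_sin_div_cos]
    field_simp; exact Real.cos_sq_add_sin_sq _
  rw [h1, h2, div_pow, one_pow, ← pow_mul]
  rw [div_le_div_iff₀ (by positivity) (by positivity)]
  nlinarith
end

section
/- For every x > 0, the function λ_x : (2, ∞) → ℝ defined by λ_x(t) = x·t + log(1 + tan²(π/t)) is strictly convex and attains a unique minimum at some t_x ∈ (2, ∞), which satisfies x = (2π/t_x²) · tan(π/t_x). -/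
open Real

private noncomputable def phiAux (t : ℝ) : ℝ := 2 * π / t ^ 2 * Real.tan (π / t)

private lemma theta_lt {t : ℝ} (ht : 2 < t) : 0 < π / t ∧ π / t < π / 2 := by
  have ht0 : (0:ℝ) < t := by linarith
  constructor
  · positivity
  · rw [div_lt_div_iff₀ ht0 two_pos]
    nlinarith [pi_pos]

private lemma cosAux_pos {t : ℝ} (ht : 2 < t) : 0 < Real.cos (π / t) :=
  Real.cos_pos_of_mem_Ioo ⟨by linarith [(theta_lt ht).1, pi_div_two_pos], (theta_lt ht).2⟩

private lemma tanAux_pos {t : ℝ} (ht : 2 < t) : 0 < Real.tan (π / t) :=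
  Real.tan_pos_of_pos_of_lt_pi_div_two (theta_lt ht).1 (theta_lt ht).2

private lemma phiAux_anti : StrictAntiOn phiAux (Set.Ioi (2:ℝ)) := by
  intro a ha b hb hab
  have ha2 : (2:ℝ) < a := ha
  have hb2 : (2:ℝ) < b := hb
  have ha0 : (0:ℝ) < a := by linarith
  have htan : Real.tan (π / b) < Real.tan (π / a) := by
    have hmem : ∀ {s : ℝ}, 2 < s → π / s ∈ Set.Ioo (-(π/2)) (π/2) := fun hs =>
      ⟨by linarith [(theta_lt hs).1, pi_div_two_pos], (theta_lt hs).2⟩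
    exact Real.strictMonoOn_tan (hmem hb2) (hmem ha2)
      (div_lt_div_of_pos_left pi_pos ha0 hab)
  have hsq : a ^ 2 < b ^ 2 := by nlinarith
  have hdiv : 2 * π / b ^ 2 < 2 * π / a ^ 2 :=
    div_lt_div_of_pos_left (by positivity) (by positivity) hsq
  have := mul_lt_mul hdiv htan.le (tanAux_pos hb2) (by positivity)
  simpa [phiAux] using this

private lemma lambda_hasDerivAt (x : ℝ) {t : ℝ} (ht : 2 < t) :
    HasDerivAt (fun t => x * t + Real.log (1 + Real.tan (π / t) ^ 2)) (x - phiAux t) t := by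
  have ht0 : t ≠ 0 := by positivity
  have hcos : Real.cos (π / t) ≠ 0 := ne_of_gt (cosAux_pos ht)
  have h1 : HasDerivAt (fun s : ℝ => π / s) (π * -(t ^ 2)⁻¹) t := by
    simpa [div_eq_mul_inv] using (hasDerivAt_inv ht0).const_mul π
  have h2 : HasDerivAt Real.tan (1 / Real.cos (π / t) ^ 2) (π / t) :=
    Real.hasDerivAt_tan hcos
  have h3 := h2.comp t h1
  have h4 := h3.pow 2
  have h5 := h4.const_add 1
  have hpos : (0:ℝ) < 1 + Real.tan (π / t) ^ 2 := by positivity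
  have h6 := h5.log (ne_of_gt hpos)
  have h8 := ((hasDerivAt_id t).const_mul x).add h6
  refine h8.congr_deriv ?_
  have key : 1 + Real.tan (π / t) ^ 2 = (Real.cos (π / t) ^ 2)⁻¹ := by
    rw [← Real.inv_one_add_tan_sq hcos, inv_inv]
  simp only [Function.comp, Pi.pow_apply, id_eq, key, phiAux]
  field_simp
  ring

private lemma phiAux_contAt {t : ℝ} (ht : 2 < t) : ContinuousAt phiAux t := by
  have ht0 : t ≠ 0 := by positivity
  have hcos : Real.cos (π / t) ≠ 0 := ne_of_gt (cosAux_pos ht)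
  have c1 : ContinuousAt (fun s : ℝ => π / s) t :=
    continuousAt_const.div continuousAt_id ht0
  have c2 : ContinuousAt (fun s : ℝ => Real.tan (π / s)) t :=
    (Real.continuousAt_tan.2 hcos).comp c1
  exact (continuousAt_const.div (continuousAt_id.pow 2) (pow_ne_zero 2 ht0)).mul c2

/-- For `x > 0`, the function `λ_x(t) = x·t + log(1 + tan²(π/t))` on `(2, ∞)` is strictly
convex and attains a unique minimum at a point `t_x ∈ (2, ∞)` characterized by the
first-order condition `x = (2π/t_x²)·tan(π/t_x)`. -/
theorem lambda_strictConvex_and_unique_min (x : ℝ) (hx : 0 < x) :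
    StrictConvexOn ℝ (Set.Ioi (2 : ℝ))
      (fun t => x * t + Real.log (1 + Real.tan (π / t) ^ 2)) ∧
    ∃! tx : ℝ, tx ∈ Set.Ioi (2 : ℝ) ∧
      (∀ t ∈ Set.Ioi (2 : ℝ),
        x * tx + Real.log (1 + Real.tan (π / tx) ^ 2) ≤
          x * t + Real.log (1 + Real.tan (π / t) ^ 2)) ∧
      x = 2 * π / tx ^ 2 * Real.tan (π / tx) := by
  set f : ℝ → ℝ := fun t => x * t + Real.log (1 + Real.tan (π / t) ^ 2) with hf
  have hderiv : ∀ t ∈ Set.Ioi (2:ℝ), deriv f t = x - phiAux t :=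
    fun t ht => (lambda_hasDerivAt x ht).deriv
  have hcontOn : ∀ s ⊆ Set.Ioi (2:ℝ), ContinuousOn f s := fun s hs t hts =>
    (lambda_hasDerivAt x (hs hts)).differentiableAt.continuousAt.continuousWithinAt
  -- strict convexity
  have hconv : StrictConvexOn ℝ (Set.Ioi (2 : ℝ)) f := by
    apply StrictMonoOn.strictConvexOn_of_deriv (convex_Ioi 2) (hcontOn _ le_rfl)
    rw [interior_Ioi]
    intro a ha b hb hab
    rw [hderiv a ha, hderiv b hb]
    have := phiAux_anti ha hb hab
    linarith
  refine ⟨hconv, ?_⟩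
  -- find a point where phiAux > x
  set M : ℝ := max 3 (9 * x / (2 * π)) + 1 with hM
  have hM3 : (3:ℝ) ≤ M - 1 := by simp [hM]
  have hMx : 9 * x / (2 * π) < M := by
    have : 9 * x / (2 * π) ≤ M - 1 := by simp [hM]
    linarith
  have hMpos : (0:ℝ) < M := by linarith
  have hθpos : 0 < Real.arctan M := by
    have := Real.arctan_strictMono hMpos
    rwa [Real.arctan_zero] at this
  have hθlt : Real.arctan M < π / 2 := Real.arctan_lt_pi_div_two M
  set a : ℝ := π / Real.arctan M with ha
  have ha2 : 2 < a := by
    rw [ha, lt_div_iff₀ hθpos]; linarith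
  have hθgt : π / 3 < Real.arctan M := by
    have hs3 : Real.sqrt 3 < 3 := by
      nlinarith [Real.sq_sqrt (by norm_num : (3:ℝ) ≥ 0), Real.sqrt_nonneg 3]
    have htan3 : Real.tan (π / 3) = Real.sqrt 3 := by
      rw [Real.tan_eq_sin_div_cos, Real.sin_pi_div_three, Real.cos_pi_div_three]
      ring
    have : Real.arctan (Real.sqrt 3) = π / 3 := by
      rw [← htan3, Real.arctan_tan (by linarith [pi_pos]) (by linarith [pi_pos])]
    calc π / 3 = Real.arctan (Real.sqrt 3) := this.symm
      _ < Real.arctan M := Real.arctan_strictMono (by linarith)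
  have ha3 : a < 3 := by
    rw [ha, div_lt_iff₀ hθpos]; linarith
  have hphia : x < phiAux a := by
    have hπa : π / a = Real.arctan M := by
      rw [ha, div_div_cancel₀]; exact ne_of_gt pi_pos
    have htana : Real.tan (π / a) = M := by rw [hπa, Real.tan_arctan]
    have h9 : 9 * x < 2 * π * M := by
      rw [div_lt_iff₀ (by positivity : (0:ℝ) < 2 * π)] at hMx; linarith
    rw [phiAux, htana, show 2 * π / a ^ 2 * M = 2 * π * M / a ^ 2 by ring,
      lt_div_iff₀ (by positivity : (0:ℝ) < a ^ 2)]
    have haux : a ^ 2 < 9 := by nlinarith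
    nlinarith [mul_lt_mul_of_pos_left haux hx]
  -- big point T where phiAux T < x
  set T : ℝ := max 4 (Real.sqrt (2 * π / x) + 1) with hT
  have hT4 : (4:ℝ) ≤ T := le_max_left _ _
  have hT2 : 2 < T := by linarith
  have hTs : Real.sqrt (2 * π / x) < T := by
    have := le_max_right 4 (Real.sqrt (2 * π / x) + 1); linarith
  have hTsq : 2 * π / x < T ^ 2 := by
    have h0 : 0 ≤ Real.sqrt (2 * π / x) := Real.sqrt_nonneg _
    nlinarith [Real.sq_sqrt (show (0:ℝ) ≤ 2 * π / x by positivity)]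
  have htanT : Real.tan (π / T) ≤ 1 := by
    have hmem1 : π / T ∈ Set.Ioo (-(π/2)) (π/2) :=
      ⟨by linarith [(theta_lt hT2).1, pi_div_two_pos], (theta_lt hT2).2⟩
    have hmem2 : π / 4 ∈ Set.Ioo (-(π/2)) (π/2) :=
      ⟨by linarith [pi_pos, pi_div_two_pos], by linarith [pi_pos]⟩
    have hle : π / T ≤ π / 4 :=
      div_le_div_of_nonneg_left pi_pos.le (by norm_num) hT4
    calc Real.tan (π / T) ≤ Real.tan (π / 4) :=
          Real.strictMonoOn_tan.monotoneOn hmem1 hmem2 hle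
      _ = 1 := Real.tan_pi_div_four
  have hphiT : phiAux T < x := by
    rw [phiAux]
    have h1 : 2 * π / T ^ 2 * Real.tan (π / T) ≤ 2 * π / T ^ 2 * 1 :=
      mul_le_mul_of_nonneg_left htanT (by positivity)
    have h2 : 2 * π / T ^ 2 < x := by
      rw [div_lt_iff₀ (by positivity : (0:ℝ) < T ^ 2)]
      rw [div_lt_iff₀ hx] at hTsq
      linarith
    linarith
  -- IVT gives critical point
  have haT : a ≤ T := by linarith
  have hsub : Set.Icc a T ⊆ Set.Ioi (2:ℝ) := fun s hs => lt_of_lt_of_le ha2 hs.1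
  have hgc : ContinuousOn (fun t => x - phiAux t) (Set.Icc a T) := fun t hts =>
    (continuousAt_const.sub (phiAux_contAt (hsub hts))).continuousWithinAt
  have hmem0 : (0:ℝ) ∈ Set.Icc (x - phiAux a) (x - phiAux T) := ⟨by linarith, by linarith⟩
  obtain ⟨tx, htxm, htx0⟩ := intermediate_value_Icc haT hgc hmem0
  have htx2 : 2 < tx := lt_of_lt_of_le ha2 htxm.1
  simp only at htx0
  have hFOC : x = phiAux tx := by linarith
  have hmin : ∀ t ∈ Set.Ioi (2:ℝ), f tx ≤ f t := by
    have hmono : StrictMonoOn f (Set.Ici tx) := by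
      apply strictMonoOn_of_deriv_pos (convex_Ici tx)
        (hcontOn _ (fun s hs => lt_of_lt_of_le htx2 hs))
      intro t ht
      rw [interior_Ici] at ht
      have ht2 : 2 < t := lt_trans htx2 ht
      rw [hderiv t ht2]
      have := phiAux_anti (Set.mem_Ioi.2 htx2) (Set.mem_Ioi.2 ht2) ht
      linarith
    have hanti : StrictAntiOn f (Set.Ioc 2 tx) := by
      apply strictAntiOn_of_deriv_neg (convex_Ioc 2 tx) (hcontOn _ (fun s hs => hs.1))
      intro t ht
      rw [interior_Ioc] at ht
      rw [hderiv t ht.1]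
      have := phiAux_anti (Set.mem_Ioi.2 ht.1) (Set.mem_Ioi.2 htx2) ht.2
      linarith
    intro t ht
    rcases lt_trichotomy t tx with h | h | h
    · exact (hanti ⟨ht, h.le⟩ ⟨htx2, le_rfl⟩ h).le
    · rw [h]
    · exact (hmono (Set.mem_Ici.2 le_rfl) (Set.mem_Ici.2 h.le) h).le
  refine ⟨tx, ⟨Set.mem_Ioi.2 htx2, hmin, hFOC⟩, ?_⟩
  rintro ty ⟨hty2, -, hFOCy⟩
  apply phiAux_anti.injOn hty2 (Set.mem_Ioi.2 htx2)
  simp only [phiAux]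
  rw [← hFOCy]
  exact hFOC
end

section
/- Let F_t(x, y) = t^α / x^β · exp(−t / y^γ) with α ∈ ℝ and β, γ > 0. Define a sequence by b_0 = 1 and b_{i+1} = exp((γ t / (2β)) b_i). Then for all t ≥ 2β/γ, the sequence (b_i) is nondecreasing, satisfies b_i ≥ i for all i ≥ 0, and for a_i = b_{k−i}^{−1/γ} (0 ≤ i ≤ k, any k ≥ 1) one has ∑_{i=1}^{k} F_t(a_{i−1}, a_i) ≤ t^α e^{−t/2} / (1 − e^{−t/2}). -/
open Real Finset

/-- Let `F_t(x,y) = t^α / x^β · exp(−t/y^γ)` with `α ∈ ℝ`, `β, γ > 0`. Let `b₀ = 1` and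
`b_{i+1} = exp((γt/(2β))·b_i)`. Then for `t ≥ 2β/γ` the sequence `(b_i)` is nondecreasing,
satisfies `b_i ≥ i`, and with `a_i = b_{k−i}^{−1/γ}` (for `0 ≤ i ≤ k`, any `k ≥ 1`) one has
`∑_{i=1}^{k} F_t(a_{i−1}, a_i) ≤ t^α e^{−t/2} / (1 − e^{−t/2})`. -/
theorem exp_iteration_bound (α β γ t : ℝ) (hβ : 0 < β) (hγ : 0 < γ) (ht : 2 * β / γ ≤ t)
    (b : ℕ → ℝ) (hb0 : b 0 = 1)
    (hbrec : ∀ i, b (i + 1) = Real.exp (γ * t / (2 * β) * b i))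
    (k : ℕ) (hk : 1 ≤ k) (a : ℕ → ℝ)
    (ha : ∀ i, a i = b (k - i) ^ (-(1 / γ))) :
    Monotone b ∧ (∀ i : ℕ, (i : ℝ) ≤ b i) ∧
      ∑ i ∈ Finset.Icc 1 k,
        t ^ α / a (i - 1) ^ β * Real.exp (-(t / a i ^ γ)) ≤
      t ^ α * Real.exp (-(t / 2)) / (1 - Real.exp (-(t / 2))) := by
  have ht0 : 0 < t := lt_of_lt_of_le (by positivity) ht
  set c := γ * t / (2 * β) with hcdef
  have hc1 : (1 : ℝ) ≤ c := by
    rw [hcdef, le_div_iff₀ (by positivity)]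
    rw [div_le_iff₀ hγ] at ht
    nlinarith
  have hbpos : ∀ i, 0 < b i := by
    intro i
    cases i with
    | zero => rw [hb0]; norm_num
    | succ n => rw [hbrec]; exact Real.exp_pos _
  have hb1 : ∀ i : ℕ, (i : ℝ) + 1 ≤ b i := by
    intro i
    induction i with
    | zero => simp [hb0]
    | succ n ih =>
      rw [hbrec]
      have h1 : c * b n + 1 ≤ Real.exp (c * b n) := Real.add_one_le_exp _
      have h2 : b n ≤ c * b n := le_mul_of_one_le_left (hbpos n).le hc1
      push_cast
      linarith
  have hmono : Monotone b := by
    apply monotone_nat_of_le_succ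
    intro n
    rw [hbrec]
    have h1 : c * b n + 1 ≤ Real.exp (c * b n) := Real.add_one_le_exp _
    have h2 : b n ≤ c * b n := le_mul_of_one_le_left (hbpos n).le hc1
    linarith
  refine ⟨hmono, fun i => by linarith [hb1 i], ?_⟩
  set r := Real.exp (-(t / 2)) with hrdef
  have hr0 : 0 < r := Real.exp_pos _
  have hr1 : r < 1 := by
    rw [hrdef, Real.exp_lt_one_iff]
    linarith
  -- rewrite each term
  have hterm : ∀ i ∈ Finset.Icc 1 k,
      t ^ α / a (i - 1) ^ β * Real.exp (-(t / a i ^ γ)) =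
      t ^ α * Real.exp (-(t / 2) * b (k - i)) := by
    intro i hi
    rw [Finset.mem_Icc] at hi
    obtain ⟨hi1, hik⟩ := hi
    set x := b (k - i) with hx
    have hxpos : 0 < x := hbpos _
    have hkey : k - (i - 1) = (k - i) + 1 := by omega
    have ha1 : a (i - 1) = Real.exp (c * x) ^ (-(1 / γ)) := by
      rw [ha, hkey, hbrec]
    have ha2 : a i = x ^ (-(1 / γ)) := by rw [ha]
    have haβ : a (i - 1) ^ β = Real.exp (c * x * (-(1 / γ)) * β) := by
      rw [ha1, ← Real.exp_mul, ← Real.exp_mul]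
    have haγ : a i ^ γ = x⁻¹ := by
      rw [ha2, ← Real.rpow_mul hxpos.le]
      · rw [show (-(1 / γ)) * γ = -1 by field_simp]
        exact Real.rpow_neg_one x
    rw [haβ, haγ, show t / x⁻¹ = t * x by field_simp,
      div_eq_mul_inv, ← Real.exp_neg, mul_assoc, ← Real.exp_add]
    congr 1
    rw [hcdef]
    field_simp
    ring
  rw [Finset.sum_congr rfl hterm]
  have htα : 0 < t ^ α := Real.rpow_pos_of_pos ht0 α
  have hbound : ∀ i ∈ Finset.Icc 1 k,
      t ^ α * Real.exp (-(t / 2) * b (k - i)) ≤ t ^ α * r ^ (k - i + 1) := by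
    intro i hi
    apply mul_le_mul_of_nonneg_left _ htα.le
    have hx := hb1 (k - i)
    have hrp : r ^ (k - i + 1) = Real.exp (((k - i + 1 : ℕ) : ℝ) * -(t / 2)) := by
      rw [Real.exp_nat_mul]
    rw [hrp]
    apply Real.exp_le_exp.mpr
    push_cast
    nlinarith [hb1 (k - i)]
  refine le_trans (Finset.sum_le_sum hbound) ?_
  have hre : ∑ i ∈ Finset.Icc 1 k, t ^ α * r ^ (k - i + 1)
      = ∑ j ∈ Finset.range k, t ^ α * r ^ (j + 1) := by
    refine Finset.sum_nbij' (fun i => k - i) (fun j => k - j) ?_ ?_ ?_ ?_ ?_ <;>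
        simp only [Finset.mem_Icc, Finset.mem_range] <;> intro a ha
    · omega
    · omega
    · omega
    · omega
    · trivial
  rw [hre]
  have h1r : (0 : ℝ) < 1 - r := by linarith
  have hgs : ∑ j ∈ Finset.range k, r ^ j ≤ 1 / (1 - r) := by
    rw [geom_sum_eq hr1.ne,
      show (r ^ k - 1) / (r - 1) = (1 - r ^ k) / (1 - r) by
        rw [← neg_div_neg_eq]; ring_nf]
    gcongr
    nlinarith [pow_nonneg hr0.le k]
  calc ∑ j ∈ Finset.range k, t ^ α * r ^ (j + 1)
      = t ^ α * r * ∑ j ∈ Finset.range k, r ^ j := by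
        rw [Finset.mul_sum]; exact Finset.sum_congr rfl fun j _ => by ring
    _ ≤ t ^ α * r * (1 / (1 - r)) := mul_le_mul_of_nonneg_left hgs (by positivity)
    _ = t ^ α * r / (1 - r) := by ring
end

section
/- There exists a map φ from the set of bridges of length 2n−1 starting at 0 and ending at −1 onto the set of excursions of length 2n−1, such that every excursion has exactly 2n−1 preimages (the cycle lemma for ±1 walks). -/
/-- A list of `±1` steps. -/
def IsStepSeq (l : List ℤ) : Prop := ∀ s ∈ l, s = 1 ∨ s = -1

/-- A bridge of length `2n−1` from `0` to `−1`, encoded by its step sequence. -/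
def IsBridge (n : ℕ) (l : List ℤ) : Prop :=
  l.length = 2 * n - 1 ∧ IsStepSeq l ∧ l.sum = -1

/-- An excursion of length `2n−1`: a bridge from `0` to `−1` whose partial sums are
nonnegative before the final step. -/
def IsExcursion (n : ℕ) (l : List ℤ) : Prop :=
  IsBridge n l ∧ ∀ t < 2 * n - 1, 0 ≤ (l.take t).sum

lemma cl_sum_take_drop (l : List ℤ) (k j : ℕ) (hkj : k ≤ j) :
    ((l.take j).drop k).sum = (l.take j).sum - (l.take k).sum := by
  have h := congrArg List.sum (List.take_append_drop k (l.take j))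
  rw [List.sum_append, List.take_take, min_eq_left hkj] at h
  linarith

lemma cl_rot_take_sum (l : List ℤ) (k t : ℕ) (hk : k ≤ l.length) (_ht : t ≤ l.length) :
    ((l.rotate k).take t).sum
      = (l.take (k + t)).sum - (l.take k).sum + (l.take (t - (l.length - k))).sum := by
  rw [List.rotate_eq_drop_append_take hk, List.take_append, List.sum_append,
      List.length_drop]
  have h1 : (l.drop k).take t = (l.take (k + t)).drop k := by
    rw [List.drop_take]
    congr 1
    omega
  have h2 : (l.take k).take (t - (l.length - k)) = l.take (t - (l.length - k)) := by
    rw [List.take_take, min_eq_left (by omega)]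
  rw [h1, h2, cl_sum_take_drop l k (k + t) (by omega)]

lemma cl_bridge_rotate {n : ℕ} {l : List ℤ} (hl : IsBridge n l) (k : ℕ) :
    IsBridge n (l.rotate k) :=
  ⟨by rw [List.length_rotate]; exact hl.1,
   fun s hs => hl.2.1 s ((List.rotate_perm l k).mem_iff.mp hs),
   by rw [(List.rotate_perm l k).sum_eq]; exact hl.2.2⟩

lemma cl_char {n : ℕ} {l : List ℤ} (hl : IsBridge n l) {k : ℕ} (hk : k < l.length) :
    IsExcursion n (l.rotate k) ↔
      ((∀ t, k ≤ t → t < l.length → (l.take k).sum ≤ (l.take t).sum) ∧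
       (∀ t, t < k → (l.take k).sum < (l.take t).sum)) := by
  have hlen : l.length = 2 * n - 1 := hl.1
  have hsum : l.sum = -1 := hl.2.2
  constructor
  · rintro ⟨-, hpos⟩
    constructor
    · intro t hkt htm
      have h := hpos (t - k) (by omega)
      rw [cl_rot_take_sum l k (t - k) (by omega) (by omega)] at h
      have e1 : k + (t - k) = t := by omega
      have e2 : t - k - (l.length - k) = 0 := by omega
      rw [e1, e2] at h
      simp only [List.take_zero, List.sum_nil] at h
      linarith
    · intro t htk
      have h := hpos (t + (l.length - k)) (by omega)
      rw [cl_rot_take_sum l k (t + (l.length - k)) (by omega) (by omega)] at h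
      have e1 : l.take (k + (t + (l.length - k))) = l := List.take_of_length_le (by omega)
      have e2 : t + (l.length - k) - (l.length - k) = t := by omega
      rw [e1, e2, hsum] at h
      linarith
  · rintro ⟨h1, h2⟩
    refine ⟨cl_bridge_rotate hl k, ?_⟩
    intro t ht
    rw [← hlen] at ht
    rw [cl_rot_take_sum l k t (by omega) (by omega)]
    rcases le_or_gt t (l.length - k) with hc | hc
    · have e2 : t - (l.length - k) = 0 := by omega
      rw [e2]
      simp only [List.take_zero, List.sum_nil]
      rcases lt_or_eq_of_le (show k + t ≤ l.length by omega) with hc2 | hc2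
      · have := h1 (k + t) (by omega) hc2
        linarith
      · rw [hc2, List.take_length, hsum]
        have hk1 : 0 < k := by omega
        have := h2 0 hk1
        simp only [List.take_zero, List.sum_nil] at this
        linarith
    · have e1 : l.take (k + t) = l := List.take_of_length_le (by omega)
      rw [e1, hsum]
      have := h2 (t - (l.length - k)) (by omega)
      linarith

lemma cl_unique {n : ℕ} {l : List ℤ} (hl : IsBridge n l) {k k' : ℕ}
    (hk : k < l.length) (hk' : k' < l.length)
    (h : IsExcursion n (l.rotate k)) (h' : IsExcursion n (l.rotate k')) : k = k' := by
  rw [cl_char hl hk] at h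
  rw [cl_char hl hk'] at h'
  rcases lt_trichotomy k k' with hc | hc | hc
  · have a := h.1 k' (le_of_lt hc) hk'
    have b := h'.2 k hc
    linarith
  · exact hc
  · have a := h'.1 k (le_of_lt hc) hk
    have b := h.2 k' hc
    linarith

lemma cl_exists_good {n : ℕ} (hn : 1 ≤ n) {l : List ℤ} (hl : IsBridge n l) :
    ∃ k, k < l.length ∧ IsExcursion n (l.rotate k) := by
  classical
  have hlen : l.length = 2 * n - 1 := hl.1
  have hpos : 0 < l.length := by omega
  have hP : ∃ k, k < l.length ∧ ∀ t, t < l.length → (l.take k).sum ≤ (l.take t).sum := by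
    obtain ⟨k, hk, hmin⟩ := Finset.exists_min_image (Finset.range l.length)
      (fun t => (l.take t).sum) ⟨0, Finset.mem_range.mpr hpos⟩
    exact ⟨k, Finset.mem_range.mp hk,
      fun t ht => hmin t (Finset.mem_range.mpr ht)⟩
  let k0 := Nat.find hP
  have hk0 := Nat.find_spec hP
  refine ⟨k0, hk0.1, ?_⟩
  rw [cl_char hl hk0.1]
  refine ⟨fun t hkt htm => hk0.2 t htm, ?_⟩
  intro t htk
  have hnot := Nat.find_min hP htk
  push_neg at hnot
  obtain ⟨u, hu, huv⟩ := hnot (by omega)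
  exact lt_of_le_of_lt (hk0.2 u hu) huv

lemma cl_unrot (l : List ℤ) {j : ℕ} (hj : j < l.length) :
    (if j = 0 then 0 else l.length - j) < l.length ∧
      (l.rotate j).rotate (if j = 0 then 0 else l.length - j) = l := by
  split_ifs with h
  · subst h
    exact ⟨hj, by simp⟩
  · refine ⟨by omega, ?_⟩
    rw [List.rotate_rotate]
    have : j + (l.length - j) = l.length := by omega
    rw [this, List.rotate_length]

/-- Cycle lemma for `±1` walks: there is a map `φ` from bridges of length `2n−1` from `0`
to `−1` onto excursions of length `2n−1` such that every excursion has exactly `2n−1`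
preimages. -/
theorem cycle_lemma (n : ℕ) (hn : 1 ≤ n) :
    ∃ φ : {l : List ℤ // IsBridge n l} → {l : List ℤ // IsExcursion n l},
      ∀ e : {l : List ℤ // IsExcursion n l},
        Nat.card {w : {l : List ℤ // IsBridge n l} // φ w = e} = 2 * n - 1 := by
  classical
  have hex : ∀ w : {l : List ℤ // IsBridge n l},
      ∃ k, k < w.1.length ∧ IsExcursion n (w.1.rotate k) :=
    fun w => cl_exists_good hn w.2
  choose κ hκlt hκexc using hex
  refine ⟨fun w => ⟨w.1.rotate (κ w), hκexc w⟩, ?_⟩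
  intro e
  have he := e.2
  have helen : e.1.length = 2 * n - 1 := he.1.1
  -- the fiber map
  have hFspec : ∀ j : Fin (2 * n - 1),
      ∃ w : {l : List ℤ // IsBridge n l}, w.1 = e.1.rotate j.1 ∧
        w.1.rotate (κ w) = e.1 := by
    intro j
    have hj : (j : ℕ) < e.1.length := by rw [helen]; exact j.2
    refine ⟨⟨e.1.rotate j.1, cl_bridge_rotate he.1 j.1⟩, rfl, ?_⟩
    set w : {l : List ℤ // IsBridge n l} := ⟨e.1.rotate j.1, cl_bridge_rotate he.1 j.1⟩
    obtain ⟨hk2lt, hk2⟩ := cl_unrot e.1 hj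
    have hwlen : w.1.length = e.1.length := List.length_rotate _ _
    have hexc2 : IsExcursion n (w.1.rotate (if (j : ℕ) = 0 then 0 else e.1.length - j)) := by
      rw [show w.1 = e.1.rotate j.1 from rfl, hk2]; exact he
    have := cl_unique w.2 (hκlt w) (by rw [hwlen]; exact hk2lt) (hκexc w) hexc2
    rw [this, show w.1 = e.1.rotate j.1 from rfl, hk2]
  choose F hF1 hF2 using hFspec
  have hbij : Function.Bijective
      (fun j : Fin (2 * n - 1) =>
        (⟨F j, Subtype.ext (hF2 j)⟩ :
          {w : {l : List ℤ // IsBridge n l} //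
            (⟨w.1.rotate (κ w), hκexc w⟩ : {l : List ℤ // IsExcursion n l}) = e})) := by
    constructor
    · intro j j' hjj
      have hj : (j : ℕ) < e.1.length := by rw [helen]; exact j.2
      have hj' : (j' : ℕ) < e.1.length := by rw [helen]; exact j'.2
      have heq : e.1.rotate j.1 = e.1.rotate j'.1 := by
        have := congrArg (fun x => x.1.1) hjj
        simpa [hF1 j, hF1 j'] using this
      -- both unrotation indices give excursions from the same bridge
      obtain ⟨ha1, ha2⟩ := cl_unrot e.1 hj
      obtain ⟨hb1, hb2⟩ := cl_unrot e.1 hj'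
      have hbr : IsBridge n (e.1.rotate j.1) := cl_bridge_rotate he.1 j.1
      have hlenr : (e.1.rotate j.1).length = e.1.length := List.length_rotate _ _
      have hexa : IsExcursion n ((e.1.rotate j.1).rotate
          (if (j : ℕ) = 0 then 0 else e.1.length - j)) := by rw [ha2]; exact he
      have hexb : IsExcursion n ((e.1.rotate j.1).rotate
          (if (j' : ℕ) = 0 then 0 else e.1.length - j')) := by rw [heq, hb2]; exact he
      have := cl_unique hbr (k := if (j : ℕ) = 0 then 0 else e.1.length - j)
        (k' := if (j' : ℕ) = 0 then 0 else e.1.length - j')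
        (by rw [hlenr]; exact ha1) (by rw [hlenr]; exact hb1) hexa hexb
      have : (j : ℕ) = (j' : ℕ) := by
        split_ifs at this <;> omega
      exact Fin.ext this
    · rintro ⟨w, hw⟩
      have hw' : w.1.rotate (κ w) = e.1 := congrArg Subtype.val hw
      have hwlen : w.1.length = 2 * n - 1 := w.2.1
      have hκw : κ w < w.1.length := hκlt w
      obtain ⟨hc1, hc2⟩ := cl_unrot w.1 hκw
      set j : ℕ := if κ w = 0 then 0 else w.1.length - κ w with hjdef
      have hjlt : j < 2 * n - 1 := by rw [← hwlen]; exact hc1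
      refine ⟨⟨j, hjlt⟩, ?_⟩
      apply Subtype.ext
      apply Subtype.ext
      have : e.1.rotate j = w.1 := by rw [← hw', hc2]
      rw [hF1 ⟨j, hjlt⟩]
      exact this
  rw [Nat.card_congr (Equiv.ofBijective _ hbij).symm, Nat.card_eq_fintype_card,
    Fintype.card_fin]
end

section
/- For x > 0, define Λ(γ) = (2π²)^{1/3} · (3/2) · (1 − (1 − γ/(2π²)^{1/3})^{2/3}) for γ < (2π²)^{1/3}. Then its Legendre–Fenchel transform Λ*(x) = sup_{γ} (γ x − Λ(γ)) equals (2π²)^{1/3} · (x + 1/(2x²) − 3/2) for x > 0, which can be rewritten as (π/2)^{2/3} · (x−1)²(2x+1)/x². -/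
open Real

/-- For `x > 0`, the Legendre–Fenchel transform of
`Λ(γ) = (2π²)^{1/3}·(3/2)·(1 − (1 − γ/(2π²)^{1/3})^{2/3})` (defined for `γ ≤ (2π²)^{1/3}`,
and `+∞` beyond, so the supremum is taken over `γ ≤ (2π²)^{1/3}`) equals
`(2π²)^{1/3}·(x + 1/(2x²) − 3/2) = (π/2)^{2/3}·(x−1)²(2x+1)/x²`. -/
theorem legendre_transform_rate_function (x : ℝ) (hx : 0 < x) :
    sSup ((fun γ : ℝ => γ * x -
          (2 * π ^ 2) ^ ((1 : ℝ) / 3) * (3 / 2) *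
            (1 - (1 - γ / (2 * π ^ 2) ^ ((1 : ℝ) / 3)) ^ ((2 : ℝ) / 3))) ''
        Set.Iic ((2 * π ^ 2) ^ ((1 : ℝ) / 3))) =
      (2 * π ^ 2) ^ ((1 : ℝ) / 3) * (x + 1 / (2 * x ^ 2) - 3 / 2) ∧
    (2 * π ^ 2) ^ ((1 : ℝ) / 3) * (x + 1 / (2 * x ^ 2) - 3 / 2) =
      (π / 2) ^ ((2 : ℝ) / 3) * ((x - 1) ^ 2 * (2 * x + 1) / x ^ 2) := by
  have hπ : (0:ℝ) < π := Real.pi_pos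
  set c : ℝ := (2 * π ^ 2) ^ ((1 : ℝ) / 3) with hc
  have hcpos : 0 < c := Real.rpow_pos_of_pos (by positivity) _
  constructor
  · apply IsGreatest.csSup_eq
    constructor
    · -- the sup is attained at γ = c (1 - 1/x³)
      refine ⟨c * (1 - 1/x^3), ?_, ?_⟩
      · have h3 : (0:ℝ) < 1/x^3 := by positivity
        simp only [Set.mem_Iic]
        nlinarith
      · have hcne : c ≠ 0 := hcpos.ne'
        have h1 : 1 - (c * (1 - 1/x^3)) / c = 1/x^3 := by field_simp; ring
        have hinv : (0:ℝ) ≤ 1/x := by positivity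
        have h2 : (1/x^3 : ℝ) ^ ((2:ℝ)/3) = 1/x^2 := by
          have hx3 : (1/x^3 : ℝ) = (1/x) ^ (3:ℕ) := by ring
          rw [hx3, ← Real.rpow_natCast (1/x) 3, ← Real.rpow_mul hinv,
            show ((3:ℕ):ℝ) * ((2:ℝ)/3) = ((2:ℕ):ℝ) by norm_num,
            Real.rpow_natCast]
          ring
        simp only [h1, h2]
        field_simp
        ring
    · rintro y ⟨γ, hγ, rfl⟩
      simp only [Set.mem_Iic] at hγ
      have hu0 : 0 ≤ 1 - γ / c := by
        have : γ / c ≤ 1 := (div_le_one hcpos).mpr hγ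
        linarith
      set t : ℝ := (1 - γ / c) ^ ((1:ℝ)/3) with htdef
      have ht0 : 0 ≤ t := Real.rpow_nonneg hu0 _
      have ht3 : t ^ 3 = 1 - γ / c := by
        rw [htdef, ← Real.rpow_natCast (_ ^ ((1:ℝ)/3)) 3, ← Real.rpow_mul hu0]
        norm_num
      have ht2 : (1 - γ / c) ^ ((2:ℝ)/3) = t ^ 2 := by
        rw [htdef, ← Real.rpow_natCast (_ ^ ((1:ℝ)/3)) 2, ← Real.rpow_mul hu0]
        norm_num
      have hγu : γ = c * (1 - t ^ 3) := by
        rw [ht3]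
        field_simp
        ring
      have key : -(t^3) * x + (3/2) * t^2 ≤ 1 / (2 * x^2) := by
        rw [le_div_iff₀ (by positivity)]
        nlinarith [mul_nonneg (sq_nonneg (x*t - 1)) (by positivity : (0:ℝ) ≤ 2*x*t + 1)]
      dsimp only
      rw [ht2, hγu]
      nlinarith [mul_le_mul_of_nonneg_left key hcpos.le]
  · have h22 : (2:ℝ) ^ ((1:ℝ)/3) * 2 ^ ((2:ℝ)/3) = 2 := by
      rw [← Real.rpow_add (by norm_num)]
      norm_num
    have hc2 : c = 2 * (π/2) ^ ((2:ℝ)/3) := by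
      rw [hc, Real.mul_rpow (by norm_num) (by positivity),
        Real.div_rpow hπ.le (by norm_num)]
      have hππ : (π^2 : ℝ) ^ ((1:ℝ)/3) = π ^ ((2:ℝ)/3) := by
        rw [← Real.rpow_natCast π 2, ← Real.rpow_mul hπ.le]
        norm_num
      rw [hππ]
      have h2pos : (0:ℝ) < (2:ℝ) ^ ((2:ℝ)/3) := Real.rpow_pos_of_pos (by norm_num) _
      field_simp
      linear_combination h22
    rw [hc2]
    field_simp
    ring
end
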